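/- For a finite set A ⊆ L₁ × L₂, the function Ā defined by Ā(z) = ⊕₂_{J ∈ K^A_z} (⊗₂_{(x,y)∈J} y), with K^A_z = {J ⊆ A | z ⪯₁ ⊕₁_{(x,y)∈J} x}, is a quasihomomorphism from D₁ to D₂. -/

import Mathlib

/-- An annotation domain: an idempotent commutative semiring
`(L, ⊕, ⊗, ⊥, ⊤)` in which `⊕` is `⊤`-annihilating. -/
structure AnnDom (L : Type*) where
  oplus : L → L → L
  otimes : L → L → L
  bot : L
  top : L
  oplus_idem : ∀ a, oplus a a = a
  oplus_comm : ∀ a b, oplus a b = oplus b a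
  oplus_assoc : ∀ a b c, oplus (oplus a b) c = oplus a (oplus b c)
  otimes_comm : ∀ a b, otimes a b = otimes b a
  otimes_assoc : ∀ a b c, otimes (otimes a b) c = otimes a (otimes b c)
  bot_oplus : ∀ a, oplus bot a = a
  top_otimes : ∀ a, otimes top a = a
  bot_otimes : ∀ a, otimes bot a = bot
  top_oplus : ∀ a, oplus top a = top
  otimes_distrib : ∀ a b c, otimes a (oplus b c) = oplus (otimes a b) (otimes a c)

/-- The induced order: `a ⪯ b` iff `a ⊕ b = b`. -/
def AnnDom.le {L : Type*} (D : AnnDom L) (a b : L) : Prop := D.oplus a b = b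


/-- `f : L₁ → L₂` is a quasihomomorphism between annotation domains:
`f(x ⊕₁ y) ⪰₂ f(x) ⊗₂ f(y)` and `f(x ⊗₁ y) ⪰₂ f(x) ⊕₂ f(y)`. -/
def IsQHom {L1 L2 : Type*} (D1 : AnnDom L1) (D2 : AnnDom L2) (f : L1 → L2) : Prop :=
  (∀ x y, D2.le (D2.otimes (f x) (f y)) (f (D1.oplus x y))) ∧
  (∀ x y, D2.le (D2.oplus (f x) (f y)) (f (D1.otimes x y)))

open Classical in
/-- The join `⊕₁` of the first coordinates of the pairs in `J` (`⊥₁` if empty). -/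
noncomputable def joinFst {L1 L2 : Type*} (D1 : AnnDom L1) (J : Finset (L1 × L2)) : L1 :=
  haveI : Std.Commutative D1.oplus := ⟨D1.oplus_comm⟩
  haveI : Std.Associative D1.oplus := ⟨D1.oplus_assoc⟩
  J.fold D1.oplus D1.bot Prod.fst

open Classical in
/-- `K^A_z = {J ⊆ A | z ⪯₁ ⊕₁_{(x,y)∈J} x}`. -/
noncomputable def Kset {L1 L2 : Type*} (D1 : AnnDom L1) (A : Finset (L1 × L2))
    (z : L1) : Finset (Finset (L1 × L2)) :=
  A.powerset.filter (fun J => D1.le z (joinFst D1 J))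


open Classical in
/-- `Ā(z) = ⊕₂_{J ∈ K^A_z} (⊗₂_{(x,y)∈J} y)` (empty join is `⊥₂`, empty
product is `⊤₂`). -/
noncomputable def Abar {L1 L2 : Type*} (D1 : AnnDom L1) (D2 : AnnDom L2)
    (A : Finset (L1 × L2)) (z : L1) : L2 :=
  haveI : Std.Commutative D2.oplus := ⟨D2.oplus_comm⟩
  haveI : Std.Associative D2.oplus := ⟨D2.oplus_assoc⟩
  haveI : Std.Commutative D2.otimes := ⟨D2.otimes_comm⟩
  haveI : Std.Associative D2.otimes := ⟨D2.otimes_assoc⟩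
  (Kset D1 A z).fold D2.oplus D2.bot (fun J => J.fold D2.otimes D2.top Prod.snd)

namespace AnnDom

variable {L : Type*} (D : AnnDom L)

theorem le_refl (a : L) : D.le a a := D.oplus_idem a

theorem le_trans {a b c : L} (h1 : D.le a b) (h2 : D.le b c) : D.le a c := by
  unfold AnnDom.le at *
  rw [← h2, ← D.oplus_assoc, h1]

theorem bot_le (a : L) : D.le D.bot a := D.bot_oplus a

theorem le_oplus_left (a b : L) : D.le a (D.oplus a b) := by
  unfold AnnDom.le
  rw [← D.oplus_assoc, D.oplus_idem]

theorem le_oplus_right (a b : L) : D.le b (D.oplus a b) := by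
  rw [D.oplus_comm]; exact D.le_oplus_left b a

theorem oplus_le {a b c : L} (h1 : D.le a c) (h2 : D.le b c) : D.le (D.oplus a b) c := by
  unfold AnnDom.le at *
  rw [D.oplus_assoc, h2, h1]

theorem otimes_le_left (a b : L) : D.le (D.otimes a b) a := by
  show D.oplus (D.otimes a b) a = a
  nth_rewrite 2 [show a = D.otimes a D.top by rw [D.otimes_comm, D.top_otimes]]
  rw [← D.otimes_distrib, D.oplus_comm, D.top_oplus, D.otimes_comm, D.top_otimes]

/-- The join `⊕` over a finite set. -/
noncomputable def fsum {ι : Type*} (S : Finset ι) (f : ι → L) : L :=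
  haveI : Std.Commutative D.oplus := ⟨D.oplus_comm⟩
  haveI : Std.Associative D.oplus := ⟨D.oplus_assoc⟩
  S.fold D.oplus D.bot f

/-- The product `⊗` over a finite set. -/
noncomputable def fprod {ι : Type*} (S : Finset ι) (f : ι → L) : L :=
  haveI : Std.Commutative D.otimes := ⟨D.otimes_comm⟩
  haveI : Std.Associative D.otimes := ⟨D.otimes_assoc⟩
  S.fold D.otimes D.top f

theorem fsum_empty {ι : Type*} (f : ι → L) : D.fsum (∅ : Finset ι) f = D.bot := rfl

open Classical in
theorem fsum_insert {ι : Type*} {S : Finset ι} {a : ι} (h : a ∉ S) (f : ι → L) :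
    D.fsum (insert a S) f = D.oplus (f a) (D.fsum S f) := by
  haveI : Std.Commutative D.oplus := ⟨D.oplus_comm⟩
  haveI : Std.Associative D.oplus := ⟨D.oplus_assoc⟩
  exact Finset.fold_insert h

open Classical in
theorem mem_le_fsum {ι : Type*} {S : Finset ι} {a : ι} (h : a ∈ S) (f : ι → L) :
    D.le (f a) (D.fsum S f) := by
  rw [← Finset.insert_erase h, D.fsum_insert (Finset.notMem_erase a S)]
  exact D.le_oplus_left _ _

open Classical in
theorem fsum_le {ι : Type*} {S : Finset ι} {f : ι → L} {c : L}
    (h : ∀ a ∈ S, D.le (f a) c) : D.le (D.fsum S f) c := by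
  induction S using Finset.induction_on with
  | empty => exact D.bot_le c
  | insert _ _ hnot ih =>
    rw [D.fsum_insert hnot]
    exact D.oplus_le (h _ (Finset.mem_insert_self _ _))
      (ih fun a ha => h a (Finset.mem_insert_of_mem ha))

theorem fsum_le_fsum_of_subset {ι : Type*} {S T : Finset ι} (h : S ⊆ T) (f : ι → L) :
    D.le (D.fsum S f) (D.fsum T f) :=
  D.fsum_le fun a ha => D.mem_le_fsum (h ha) f

open Classical in
theorem otimes_fsum {ι : Type*} (b : L) (S : Finset ι) (f : ι → L) :
    D.otimes b (D.fsum S f) = D.fsum S (fun a => D.otimes b (f a)) := by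
  induction S using Finset.induction_on with
  | empty =>
    rw [fsum_empty, fsum_empty, D.otimes_comm, D.bot_otimes]
  | insert _ _ hnot ih =>
    rw [D.fsum_insert hnot, D.fsum_insert hnot, D.otimes_distrib, ih]

theorem fprod_otimes_fprod {ι : Type*} [DecidableEq ι] (J J' : Finset ι) (f : ι → L) :
    D.le (D.otimes (D.fprod J f) (D.fprod J' f)) (D.fprod (J ∪ J') f) := by
  haveI : Std.Commutative D.otimes := ⟨D.otimes_comm⟩
  haveI : Std.Associative D.otimes := ⟨D.otimes_assoc⟩
  have key : D.otimes ((J ∪ J').fold D.otimes D.top f) ((J ∩ J').fold D.otimes D.top f)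
      = D.otimes (J.fold D.otimes D.top f) (J'.fold D.otimes D.top f) :=
    Finset.fold_union_inter
  show D.le (D.otimes (J.fold D.otimes D.top f) (J'.fold D.otimes D.top f)) _
  rw [← key]
  exact D.otimes_le_left _ _

end AnnDom

open Classical in
theorem mem_Kset {L1 L2 : Type*} {D1 : AnnDom L1} {A : Finset (L1 × L2)}
    {z : L1} {J : Finset (L1 × L2)} :
    J ∈ Kset D1 A z ↔ J ⊆ A ∧ D1.le z (D1.fsum J Prod.fst) := by
  unfold Kset
  rw [Finset.mem_filter, Finset.mem_powerset]
  rfl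

theorem Abar_eq {L1 L2 : Type*} (D1 : AnnDom L1) (D2 : AnnDom L2)
    (A : Finset (L1 × L2)) (z : L1) :
    Abar D1 D2 A z = D2.fsum (Kset D1 A z) (fun J => D2.fprod J Prod.snd) := rfl

/-- For a finite set `A ⊆ L₁ × L₂`, the induced function `Ā` is a
quasihomomorphism from `D₁` to `D₂`. -/
theorem stmt14 {L1 L2 : Type*} (D1 : AnnDom L1) (D2 : AnnDom L2)
    (A : Finset (L1 × L2)) :
    IsQHom D1 D2 (Abar D1 D2 A) := by
  classical
  constructor
  · intro x y
    rw [Abar_eq, Abar_eq, Abar_eq, D2.otimes_fsum]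
    apply D2.fsum_le
    intro J hJ
    rw [D2.otimes_comm, D2.otimes_fsum]
    apply D2.fsum_le
    intro J' hJ'
    rw [mem_Kset] at hJ hJ'
    have hmem : J ∪ J' ∈ Kset D1 A (D1.oplus x y) := by
      rw [mem_Kset]
      refine ⟨Finset.union_subset hJ.1 hJ'.1, D1.oplus_le ?_ ?_⟩
      · exact D1.le_trans hJ'.2 (D1.fsum_le_fsum_of_subset Finset.subset_union_right _)
      · exact D1.le_trans hJ.2 (D1.fsum_le_fsum_of_subset Finset.subset_union_left _)
    exact D2.le_trans (D2.fprod_otimes_fprod J J' Prod.snd)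
      (D2.mem_le_fsum hmem (fun J => D2.fprod J Prod.snd))
  · intro x y
    have key : ∀ z w : L1, D1.le (D1.otimes x y) z →
        D2.le (Abar D1 D2 A z) (Abar D1 D2 A (D1.otimes x y)) := by
      intro z _ hz
      rw [Abar_eq, Abar_eq]
      apply D2.fsum_le
      intro J hJ
      rw [mem_Kset] at hJ
      have hmem : J ∈ Kset D1 A (D1.otimes x y) := by
        rw [mem_Kset]
        exact ⟨hJ.1, D1.le_trans hz hJ.2⟩
      exact D2.mem_le_fsum hmem _
    exact D2.oplus_le (key x x (D1.otimes_le_left x y))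
      (key y y (by rw [D1.otimes_comm]; exact D1.otimes_le_left y x))
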